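/- Assume for every r ≥ 2 there exist graphs (X_{r,m})_{m≥1} such that ω(X_{r,m}) = r, χ(X_{r,m}) ≥ m, each X_{r,m} contains an induced subgraph with clique number 2 and chromatic number r, and the hereditary closure ℋ_r of {X_{r,m} : m ≥ 1} is (r−1)-good. Then the class 𝒞 = {X_{r,m} : r ≥ 2, m ≥ 1} is Pollyanna but, for every integer k ≥ 1, is not k-strongly Pollyanna; in particular 𝒞 is not strongly Pollyanna. -/
import Mathlib


open SimpleGraph

/-- A class of graphs, with arbitrary vertex types, is a set of bundled graphs. -/
abbrev GraphClass : Type 1 := Set (Σ V : Type, SimpleGraph V)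

/-- `IndSub H G` means `H` is (isomorphic to) an induced subgraph of `G`. -/
def IndSub (H G : Σ V : Type, SimpleGraph V) : Prop := Nonempty (H.2 ↪g G.2)

/-- A class of graphs is hereditary if it is closed under induced subgraphs. -/
def Hereditary (𝒜 : GraphClass) : Prop := ∀ G ∈ 𝒜, ∀ H, IndSub H G → H ∈ 𝒜

/-- The hereditary closure of a class of graphs. -/
def Ind (𝒜 : GraphClass) : GraphClass := {H | ∃ G ∈ 𝒜, IndSub H G}

/-- A class is `χ`-bounded if some function of the clique number bounds the
chromatic number of all induced subgraphs of its members. -/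
def ChiBounded (ℱ : GraphClass) : Prop :=
  ∃ φ : ℕ → ℕ, ∀ G ∈ ℱ, ∀ H, IndSub H G →
    H.2.chromaticNumber ≤ (φ H.2.cliqueNum : ℕ∞)

/-- A class is polynomially `χ`-bounded if the bounding function can be taken
to be a polynomial. -/
def PolyChiBounded (ℱ : GraphClass) : Prop :=
  ∃ p : Polynomial ℕ, ∀ G ∈ ℱ, ∀ H, IndSub H G →
    H.2.chromaticNumber ≤ ((p.eval H.2.cliqueNum : ℕ) : ℕ∞)

/-- A hereditary class is `n`-good if the chromatic numbers of induced
subgraphs with clique number at most `n` are uniformly bounded. -/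
def NGood (n : ℕ) (ℱ : GraphClass) : Prop :=
  Hereditary ℱ ∧ ∃ c : ℕ, ∀ G ∈ ℱ, ∀ H, IndSub H G → H.2.cliqueNum ≤ n →
    H.2.chromaticNumber ≤ (c : ℕ∞)

/-- A class `𝒞` is Pollyanna if `𝒞 ∩ ℱ` is polynomially `χ`-bounded for every
`χ`-bounded class `ℱ`. -/
def Pollyanna (𝒞 : GraphClass) : Prop :=
  ∀ ℱ : GraphClass, ChiBounded ℱ → PolyChiBounded (𝒞 ∩ ℱ)

/-- A class `𝒞` is `k`-strongly Pollyanna if `𝒞 ∩ ℱ` is polynomially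
`χ`-bounded for every `k`-good class `ℱ`. -/
def KStronglyPollyanna (k : ℕ) (𝒞 : GraphClass) : Prop :=
  ∀ ℱ : GraphClass, NGood k ℱ → PolyChiBounded (𝒞 ∩ ℱ)

/-- A class is strongly Pollyanna if it is `k`-strongly Pollyanna for some
`k ≥ 1`. -/
def StronglyPollyanna (𝒞 : GraphClass) : Prop :=
  ∃ k : ℕ, 1 ≤ k ∧ KStronglyPollyanna k 𝒞

lemma my_cliqueNum_mono {V W : Type*} {G : SimpleGraph V} {H : SimpleGraph W}
    (f : G ↪g H) (hbdd : BddAbove {n | ∃ s, H.IsNClique n s}) :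
    G.cliqueNum ≤ H.cliqueNum := by
  rw [cliqueNum, cliqueNum]
  refine csSup_le_csSup hbdd ⟨0, ∅, by simp⟩ ?_
  rintro n ⟨s, hs⟩
  refine ⟨s.map f.toEmbedding, (hs.map (f := f.toEmbedding)).mono ?_⟩
  rw [SimpleGraph.map_le_iff_le_comap]
  intro a b hab
  exact f.map_adj_iff.2 hab

lemma my_bddAbove {V : Type*} {G : SimpleGraph V} (h : G.cliqueNum ≠ 0) :
    BddAbove {n | ∃ s, G.IsNClique n s} := by
  by_contra hb
  have h0 := csSup_of_not_bddAbove hb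
  rw [csSup_empty] at h0
  exact h (by rw [cliqueNum, h0]; rfl)

/-- Assume for every `r ≥ 2` there are graphs `X_{r,m}` (`m ≥ 1`) with
`ω(X_{r,m}) = r`, `χ(X_{r,m}) ≥ m`, each containing an induced subgraph with
clique number 2 and chromatic number `r`, and such that the hereditary closure
of `{X_{r,m} : m ≥ 1}` is `(r-1)`-good.  Then `𝒞 = {X_{r,m} : r ≥ 2, m ≥ 1}`
is Pollyanna but, for every `k ≥ 1`, not `k`-strongly Pollyanna; in particular
`𝒞` is not strongly Pollyanna. -/
theorem pollyanna_not_strongly_pollyanna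
    (X : ℕ → ℕ → Σ V : Type, SimpleGraph V)
    (hω : ∀ r : ℕ, 2 ≤ r → ∀ m : ℕ, 1 ≤ m → (X r m).2.cliqueNum = r)
    (hχ : ∀ r : ℕ, 2 ≤ r → ∀ m : ℕ, 1 ≤ m → (m : ℕ∞) ≤ (X r m).2.chromaticNumber)
    (htag : ∀ r : ℕ, 2 ≤ r → ∀ m : ℕ, 1 ≤ m → ∃ T, IndSub T (X r m) ∧
      T.2.cliqueNum = 2 ∧ T.2.chromaticNumber = (r : ℕ∞))
    (hgood : ∀ r : ℕ, 2 ≤ r → NGood (r - 1) (Ind {G | ∃ m : ℕ, 1 ≤ m ∧ G = X r m})) :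
    Pollyanna {G | ∃ r : ℕ, 2 ≤ r ∧ ∃ m : ℕ, 1 ≤ m ∧ G = X r m} ∧
    (∀ k, 1 ≤ k → ¬ KStronglyPollyanna k {G | ∃ r : ℕ, 2 ≤ r ∧ ∃ m : ℕ, 1 ≤ m ∧ G = X r m}) ∧
    ¬ StronglyPollyanna {G | ∃ r : ℕ, 2 ≤ r ∧ ∃ m : ℕ, 1 ≤ m ∧ G = X r m} := by
  set 𝒞 : GraphClass := {G | ∃ r : ℕ, 2 ≤ r ∧ ∃ m : ℕ, 1 ≤ m ∧ G = X r m} with h𝒞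
  have part2 : ∀ k, 1 ≤ k → ¬ KStronglyPollyanna k 𝒞 := by
    intro k hk hSP
    obtain ⟨p, hp⟩ := hSP (Ind {G | ∃ m : ℕ, 1 ≤ m ∧ G = X (k + 1) m})
      (by simpa using hgood (k + 1) (by omega))
    set N := p.eval (k + 1) with hN
    have hmem : X (k + 1) (N + 1) ∈ 𝒞 ∩ Ind {G | ∃ m : ℕ, 1 ≤ m ∧ G = X (k + 1) m} :=
      ⟨⟨k + 1, by omega, N + 1, by omega, rfl⟩,
       ⟨X (k + 1) (N + 1), ⟨N + 1, by omega, rfl⟩, ⟨SimpleGraph.Embedding.refl⟩⟩⟩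
    have h1 := hp _ hmem _ ⟨SimpleGraph.Embedding.refl⟩
    rw [hω (k + 1) (by omega) (N + 1) (by omega)] at h1
    have h2 := (hχ (k + 1) (by omega) (N + 1) (by omega)).trans h1
    rw [Nat.cast_le] at h2
    omega
  refine ⟨?_, part2, ?_⟩
  · intro ℱ hℱ
    obtain ⟨φ, hφ⟩ := hℱ
    refine ⟨Polynomial.C ((Finset.range (φ 2 + 1)).sup φ), ?_⟩
    rintro G ⟨⟨r, hr, m, hm, rfl⟩, hGℱ⟩ H hH
    obtain ⟨T, hT, hTω, hTχ⟩ := htag r hr m hm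
    have h1 := hφ _ hGℱ T hT
    rw [hTω, hTχ] at h1
    have hrφ : r ≤ φ 2 := by exact_mod_cast h1
    obtain ⟨f⟩ := hH
    have hbdd : BddAbove {n | ∃ s, (X r m).2.IsNClique n s} :=
      my_bddAbove (by rw [hω r hr m hm]; omega)
    have hHω : H.2.cliqueNum ≤ r := by
      rw [← hω r hr m hm]; exact my_cliqueNum_mono f hbdd
    refine (hφ _ hGℱ H ⟨f⟩).trans ?_
    rw [Polynomial.eval_C, Nat.cast_le]
    exact Finset.le_sup (Finset.mem_range.2 (by omega))
  · rintro ⟨k, hk, h⟩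
    exact part2 k hk h
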